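/- Let p_1 ≥ p_2 ≥ ... ≥ p_n > 0, let 1 ≤ k < n, let α ∈ (0,∞), and let 2 ≤ s ≤ k. If (k−s+2)·p_{s−1}^α / Σ_{i=s−1}^{n} p_i^α > 1, then (k−i+1)·p_i^α / Σ_{j=i}^{n} p_j^α > 1 for all i ∈ [1:s−1]. Moreover, for r = k one always has (k−k+1)·p_k^α / Σ_{i=k}^{n} p_i^α ≤ 1, so the set { r ∈ {1,...,k} : (k−r+1)·p_r^α / Σ_{i=r}^{n} p_i^α ≤ 1 } is nonempty. -/
import Mathlib


open Finset

/-- Structural properties of the cases in Theorem 1 (1-based indexing, `p i` for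
`i ∈ {1, …, n}`, sorted nonincreasingly with positive entries):
if `(k−s+2)·p_{s−1}^α / Σ_{i=s−1}^n p_i^α > 1` then
`(k−i+1)·p_i^α / Σ_{j=i}^n p_j^α > 1` for all `i ∈ [1:s−1]`; moreover for `r = k` one
always has `(k−k+1)·p_k^α / Σ_{i=k}^n p_i^α ≤ 1`, so the set defining `s*` is
nonempty. -/
theorem cases_structure_and_sstar_well_defined
    (n k : ℕ) (hk1 : 1 ≤ k) (hkn : k < n)
    (α : ℝ) (hα : 0 < α)
    (p : ℕ → ℝ) (hp0 : ∀ i ∈ Finset.Icc 1 n, 0 < p i)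
    (hp1 : ∑ i ∈ Finset.Icc 1 n, p i = 1)
    (hsorted : ∀ i j, 1 ≤ i → i ≤ j → j ≤ n → p j ≤ p i)
    (s : ℕ) (hs2 : 2 ≤ s) (hsk : s ≤ k)
    (hcase : 1 < ((k : ℝ) - (s - 1 : ℕ) + 1) * p (s - 1) ^ α /
        (∑ i ∈ Finset.Icc (s - 1) n, p i ^ α)) :
    (∀ i ∈ Finset.Icc 1 (s - 1),
      1 < ((k : ℝ) - i + 1) * p i ^ α / (∑ j ∈ Finset.Icc i n, p j ^ α)) ∧
    ((k : ℝ) - k + 1) * p k ^ α / (∑ i ∈ Finset.Icc k n, p i ^ α) ≤ 1 ∧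
    {r : ℕ | r ∈ Finset.Icc 1 k ∧
      ((k : ℝ) - r + 1) * p r ^ α / (∑ i ∈ Finset.Icc r n, p i ^ α) ≤ 1}.Nonempty := by
  have hαle : (0:ℝ) ≤ α := hα.le
  have hkn' : k ≤ n := hkn.le
  have hterm : ∀ j, 1 ≤ j → j ≤ n → 0 < p j ^ α := fun j h1 h2 =>
    Real.rpow_pos_of_pos (hp0 j (Finset.mem_Icc.2 ⟨h1, h2⟩)) α
  have hSpos : ∀ i, 1 ≤ i → i ≤ n → 0 < ∑ j ∈ Finset.Icc i n, p j ^ α := by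
    intro i h1 h2
    apply Finset.sum_pos
    · intro j hj
      rw [Finset.mem_Icc] at hj
      exact hterm j (le_trans h1 hj.1) hj.2
    · exact ⟨i, Finset.mem_Icc.2 ⟨le_refl i, h2⟩⟩
  have hs11 : 1 ≤ s - 1 := by omega
  have hs1k : s - 1 ≤ k := by omega
  have hs1n : s - 1 ≤ n := by omega
  -- part 2
  have part2 : ((k : ℝ) - k + 1) * p k ^ α / (∑ i ∈ Finset.Icc k n, p i ^ α) ≤ 1 := by
    rw [div_le_one (hSpos k hk1 hkn')]
    have h1 : ((k : ℝ) - k + 1) = 1 := by ring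
    rw [h1, one_mul]
    exact Finset.single_le_sum (f := fun j => p j ^ α)
      (fun j hj => by
        rw [Finset.mem_Icc] at hj
        exact (hterm j (le_trans hk1 hj.1) hj.2).le)
      (Finset.mem_Icc.2 ⟨le_refl k, hkn'⟩)
  refine ⟨?_, part2, ⟨k, Finset.mem_Icc.2 ⟨hk1, le_refl k⟩, part2⟩⟩
  intro i hi
  rw [Finset.mem_Icc] at hi
  obtain ⟨hi1, hi2⟩ := hi
  have hin : i ≤ n := hi2.trans hs1n
  rw [one_lt_div (hSpos (s-1) hs11 hs1n)] at hcase
  rw [one_lt_div (hSpos i hi1 hin)]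
  -- split the sum
  have hsplit : ∑ j ∈ Finset.Icc i n, p j ^ α
      = (∑ j ∈ Finset.Ico i (s-1), p j ^ α) + ∑ j ∈ Finset.Icc (s-1) n, p j ^ α := by
    rw [← Finset.Ico_add_one_right_eq_Icc i n, ← Finset.Ico_add_one_right_eq_Icc (s-1) n]
    exact (Finset.sum_Ico_consecutive _ hi2 (by omega)).symm
  have hbound : ∑ j ∈ Finset.Ico i (s-1), p j ^ α ≤ ((s - 1 - i : ℕ) : ℝ) * p i ^ α := by
    calc ∑ j ∈ Finset.Ico i (s-1), p j ^ α
        ≤ ∑ _j ∈ Finset.Ico i (s-1), p i ^ α := by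
          apply Finset.sum_le_sum
          intro j hj
          rw [Finset.mem_Ico] at hj
          have hjn : j ≤ n := by omega
          exact Real.rpow_le_rpow (hp0 j (Finset.mem_Icc.2 ⟨le_trans hi1 hj.1, hjn⟩)).le
            (hsorted i j hi1 hj.1 hjn) hαle
      _ = ((s - 1 - i : ℕ) : ℝ) * p i ^ α := by
          rw [Finset.sum_const, Nat.card_Ico, nsmul_eq_mul]
  have hmono : ((k : ℝ) - (s - 1 : ℕ) + 1) * p (s-1) ^ α
      ≤ ((k : ℝ) - (s - 1 : ℕ) + 1) * p i ^ α := by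
    apply mul_le_mul_of_nonneg_left
    · exact Real.rpow_le_rpow (hp0 (s-1) (Finset.mem_Icc.2 ⟨hs11, hs1n⟩)).le
        (hsorted i (s-1) hi1 hi2 hs1n) hαle
    · have : ((s - 1 : ℕ) : ℝ) ≤ (k : ℝ) := by exact_mod_cast hs1k
      linarith
  have hcast : ((s - 1 - i : ℕ) : ℝ) + ((k : ℝ) - (s - 1 : ℕ) + 1) = (k : ℝ) - i + 1 := by
    have h1 : ((s - 1 - i : ℕ) : ℝ) = ((s-1 : ℕ) : ℝ) - (i : ℝ) := by
      push_cast [Nat.cast_sub hi2]; ring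
    rw [h1]; ring
  calc ∑ j ∈ Finset.Icc i n, p j ^ α
      = (∑ j ∈ Finset.Ico i (s-1), p j ^ α) + ∑ j ∈ Finset.Icc (s-1) n, p j ^ α := hsplit
    _ < ((s - 1 - i : ℕ) : ℝ) * p i ^ α + ((k : ℝ) - (s - 1 : ℕ) + 1) * p (s-1) ^ α := by
        exact add_lt_add_of_le_of_lt hbound hcase
    _ ≤ ((s - 1 - i : ℕ) : ℝ) * p i ^ α + ((k : ℝ) - (s - 1 : ℕ) + 1) * p i ^ α := by
        linarith
    _ = ((k : ℝ) - i + 1) * p i ^ α := by rw [← add_mul, hcast]
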